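/- arXiv:1908.06823 — 3 statements merged into one kernel-verified Lean document; each statement's English description precedes it below -/
import Mathlib

section
/- If F is a free product of cyclic groups (each free factor finite cyclic or infinite cyclic), then the second integral group homology H₂(F;ℤ) with trivial coefficients is trivial. -/
/-- The free product `⟨f₁⟩ ∗ ⋯ ∗ ⟨f_d⟩` of cyclic groups, the `i`-th factor being cyclic of
order `m i` (with `m i = 0` corresponding to an infinite cyclic factor, since `ZMod 0 = ℤ`). -/
abbrev FreeProdCyclic {ι : Type*} (m : ι → ℕ) : Type _ :=
  Monoid.CoprodI (fun i : ι => Multiplicative (ZMod (m i)))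

/-- The distinguished generator `fᵢ` of the `i`-th cyclic free factor. -/
def cyclicGen {ι : Type*} (m : ι → ℕ) (i : ι) : FreeProdCyclic m :=
  Monoid.CoprodI.of (Multiplicative.ofAdd (1 : ZMod (m i)))

/-- The quotient `([F,F] ⊓ R) / [R,F]` appearing in the Hopf formula. -/
abbrev hopfQuotient {F : Type*} [Group F] (R : Subgroup F) : Type _ :=
  ↥(⁅(⊤ : Subgroup F), (⊤ : Subgroup F)⁆ ⊓ R) ⧸
    ((⁅R, (⊤ : Subgroup F)⁆).subgroupOf (⁅(⊤ : Subgroup F), (⊤ : Subgroup F)⁆ ⊓ R))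

instance hopfQuotient_normal {F : Type*} [Group F] (R : Subgroup F) [R.Normal] :
    ((⁅R, (⊤ : Subgroup F)⁆).subgroupOf
      (⁅(⊤ : Subgroup F), (⊤ : Subgroup F)⁆ ⊓ R)).Normal :=
  Subgroup.Normal.subgroupOf inferInstance _

/-- The second integral homology `H₂(G;ℤ)` of a group `G`, realized via the Hopf formula
`H₂(G;ℤ) ≅ ([F,F] ⊓ R)/[R,F]` applied to the canonical presentation `1 → R → F → G → 1`
of `G` by the free group `F` on the underlying set of `G` (with projection `F → G`
induced by the identity map, whose kernel is `R`). -/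
abbrev H2Z (G : Type*) [Group G] : Type _ :=
  hopfQuotient (MonoidHom.ker (FreeGroup.lift (id : G → G)))

/-!
STATEMENT 2: If `F` is a free product of cyclic groups (each free factor finite cyclic or
infinite cyclic), then the second integral group homology `H₂(F;ℤ)` with trivial
coefficients is trivial.
-/
open Subgroup

/-- Two lifts of the same homomorphism agree modulo `⁅R, ⊤⁆` on the commutator subgroup. -/
lemma lifts_agree_aux {A B G : Type*} [Group A] [Group B] [Group G]
    (π : B →* G) (φ ψ : A →* B) (h : π.comp φ = π.comp ψ)
    {x : A} (hx : x ∈ ⁅(⊤ : Subgroup A), (⊤ : Subgroup A)⁆) :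
    (φ x)⁻¹ * ψ x ∈ ⁅π.ker, (⊤ : Subgroup B)⁆ := by
  set N : Subgroup B := ⁅π.ker, (⊤ : Subgroup B)⁆ with hN
  let p : B →* B ⧸ N := QuotientGroup.mk' N
  have hker : ∀ a : A, (φ a)⁻¹ * ψ a ∈ π.ker := by
    intro a
    have h1 := DFunLike.congr_fun h a
    simp only [MonoidHom.comp_apply] at h1
    simp [MonoidHom.mem_ker, h1]
  have hcent : ∀ r ∈ π.ker, ∀ g : B, Commute (p r) (p g) := by
    intro r hr g
    rw [← commutatorElement_eq_one_iff_commute, ← map_commutatorElement]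
    exact (QuotientGroup.eq_one_iff _).mpr
      (Subgroup.commutator_mem_commutator hr (Subgroup.mem_top g))
  let c : A →* B ⧸ N :=
  { toFun := fun a => p ((φ a)⁻¹ * ψ a)
    map_one' := by simp
    map_mul' := by
      intro a b
      have e1 : (φ (a * b))⁻¹ * ψ (a * b) = (φ b)⁻¹ * ((φ a)⁻¹ * ψ a) * ψ b := by
        simp [mul_assoc]
      have e2 : Commute (p ((φ a)⁻¹ * ψ a)) (p ((φ b)⁻¹)) := hcent _ (hker a) _
      rw [e1]
      calc p ((φ b)⁻¹ * ((φ a)⁻¹ * ψ a) * ψ b)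
          = p ((φ b)⁻¹) * p ((φ a)⁻¹ * ψ a) * p (ψ b) := by rw [map_mul, map_mul]
        _ = p ((φ a)⁻¹ * ψ a) * p ((φ b)⁻¹) * p (ψ b) := by rw [e2.eq]
        _ = p ((φ a)⁻¹ * ψ a) * p ((φ b)⁻¹ * ψ b) := by rw [mul_assoc, ← map_mul] }
  have hcle : ⁅(⊤ : Subgroup A), (⊤ : Subgroup A)⁆ ≤ c.ker := by
    rw [Subgroup.commutator_le]
    intro a _ b _
    rw [MonoidHom.mem_ker, map_commutatorElement, commutatorElement_eq_one_iff_commute]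
    exact hcent _ (hker a) _
  have hcx : c x = 1 := hcle hx
  exact (QuotientGroup.eq_one_iff _).mp hcx

/-- Triviality of the Hopf kernel condition transfers between presentations. -/
lemma hopf_transfer {F₀ F₁ G : Type*} [Group F₀] [Group F₁] [Group G]
    (π₀ : F₀ →* G) (π₁ : F₁ →* G) (φ : F₀ →* F₁) (ψ : F₁ →* F₀)
    (hφ : π₁.comp φ = π₀) (hψ : π₀.comp ψ = π₁)
    (h1 : ⁅(⊤ : Subgroup F₁), (⊤ : Subgroup F₁)⁆ ⊓ π₁.ker ≤ ⁅π₁.ker, (⊤ : Subgroup F₁)⁆) :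
    ⁅(⊤ : Subgroup F₀), (⊤ : Subgroup F₀)⁆ ⊓ π₀.ker ≤ ⁅π₀.ker, (⊤ : Subgroup F₀)⁆ := by
  intro x hx
  rw [Subgroup.mem_inf] at hx
  obtain ⟨hxc, hxk⟩ := hx
  have hφx : φ x ∈ ⁅(⊤ : Subgroup F₁), (⊤ : Subgroup F₁)⁆ := by
    have h2 := Subgroup.mem_map_of_mem φ hxc
    rw [Subgroup.map_commutator] at h2
    exact Subgroup.commutator_mono le_top le_top h2
  have hφk : φ x ∈ π₁.ker := by
    rw [MonoidHom.mem_ker, ← MonoidHom.comp_apply, hφ]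
    exact hxk
  have h2 : φ x ∈ ⁅π₁.ker, (⊤ : Subgroup F₁)⁆ := h1 (Subgroup.mem_inf.mpr ⟨hφx, hφk⟩)
  have h3 : ψ (φ x) ∈ ⁅π₀.ker, (⊤ : Subgroup F₀)⁆ := by
    have h4 := Subgroup.mem_map_of_mem ψ h2
    rw [Subgroup.map_commutator] at h4
    refine Subgroup.commutator_mono ?_ le_top h4
    rintro y ⟨z, hz, rfl⟩
    rw [MonoidHom.mem_ker, ← MonoidHom.comp_apply, hψ]
    exact hz
  have h5 : π₀.comp (ψ.comp φ) = π₀.comp (MonoidHom.id F₀) := by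
    rw [← MonoidHom.comp_assoc, hψ, hφ, MonoidHom.comp_id]
  have h6 := lifts_agree_aux π₀ (ψ.comp φ) (MonoidHom.id F₀) h5 hxc
  simp only [MonoidHom.comp_apply, MonoidHom.id_apply] at h6
  have h7 := mul_mem h3 h6
  simpa using h7

/-- A homomorphism `Multiplicative (ZMod n) →* H` sending the generator to an element `q`
with `q ^ n = 1`. -/
noncomputable def powHom {H : Type*} [Group H] (n : ℕ) (q : H) (hq : q ^ n = 1) :
    Multiplicative (ZMod n) →* H :=
  AddMonoidHom.toMultiplicativeLeft
    (ZMod.lift n ⟨zmultiplesHom (Additive H) (Additive.ofMul q), by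
      rw [zmultiplesHom_apply, ← ofMul_zpow, zpow_natCast, hq, ofMul_one]⟩)

lemma powHom_intCast {H : Type*} [Group H] (n : ℕ) (q : H) (hq : q ^ n = 1) (k : ℤ) :
    powHom n q hq (Multiplicative.ofAdd ((k : ZMod n))) = q ^ k := by
  simp only [powHom, AddMonoidHom.coe_toMultiplicativeLeft, Function.comp_apply, toAdd_ofAdd]
  rw [ZMod.lift_coe, zmultiplesHom_apply, ← ofMul_zpow]
  rfl

lemma powHom_one {H : Type*} [Group H] (n : ℕ) (q : H) (hq : q ^ n = 1) :
    powHom n q hq (Multiplicative.ofAdd (1 : ZMod n)) = q := by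
  have h1 : ((1 : ℤ) : ZMod n) = 1 := by push_cast; rfl
  rw [← h1, powHom_intCast, zpow_one]

section FPC

variable {d : ℕ} (m : Fin d → ℕ)

/-- The projection from the free group on `Fin d` to the free product of cyclic groups. -/
def fpcProj : FreeGroup (Fin d) →* FreeProdCyclic m :=
  FreeGroup.lift (fun i => cyclicGen m i)

lemma fpcProj_of (i : Fin d) : fpcProj m (FreeGroup.of i) = cyclicGen m i :=
  FreeGroup.lift_apply_of

lemma cyclicGen_zpow (i : Fin d) (k : ℤ) :
    cyclicGen m i ^ k = (Monoid.CoprodI.of (Multiplicative.ofAdd ((k : ZMod (m i)))) : FreeProdCyclic m) := by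
  rw [cyclicGen, ← map_zpow, ← ofAdd_zsmul, zsmul_one]

lemma cyclicGen_pow_self (i : Fin d) : cyclicGen m i ^ (m i) = 1 := by
  rw [← zpow_natCast, cyclicGen_zpow]
  simp

lemma fpcProj_surjective : Function.Surjective (fpcProj m) := by
  intro x
  induction x using Monoid.CoprodI.induction_on with
  | one => exact ⟨1, map_one _⟩
  | of i y =>
    refine ⟨FreeGroup.of i ^ ((ZMod.cast y.toAdd : ℤ)), ?_⟩
    rw [map_zpow, fpcProj_of, cyclicGen_zpow, ZMod.intCast_zmod_cast]
    rfl
  | mul x y hx hy =>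
    obtain ⟨a, rfl⟩ := hx
    obtain ⟨b, rfl⟩ := hy
    exact ⟨a * b, map_mul _ _ _⟩

/-- The relator set `{ xᵢ^(m i) }`. -/
def fpcRels : Set (FreeGroup (Fin d)) := Set.range fun i => FreeGroup.of i ^ m i

lemma fpcRels_mem_ker : ∀ s ∈ fpcRels m, s ∈ (fpcProj m).ker := by
  rintro s ⟨i, rfl⟩
  rw [MonoidHom.mem_ker, map_pow, fpcProj_of, cyclicGen_pow_self]

lemma ker_fpcProj : (fpcProj m).ker = Subgroup.normalClosure (fpcRels m) := by
  refine le_antisymm ?_ (Subgroup.normalClosure_le_normal (fpcRels_mem_ker m))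
  intro x hx
  set Q₂ := FreeGroup (Fin d) ⧸ Subgroup.normalClosure (fpcRels m)
  have hgen : ∀ i : Fin d, ((QuotientGroup.mk (FreeGroup.of i) : Q₂)) ^ (m i) = 1 := by
    intro i
    rw [← QuotientGroup.mk_pow, QuotientGroup.eq_one_iff]
    exact Subgroup.subset_normalClosure ⟨i, rfl⟩
  let σ : FreeProdCyclic m →* Q₂ :=
    Monoid.CoprodI.lift fun i => powHom (m i) _ (hgen i)
  have key : σ.comp (fpcProj m) = QuotientGroup.mk' (Subgroup.normalClosure (fpcRels m)) := by
    apply FreeGroup.ext_hom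
    intro i
    rw [MonoidHom.comp_apply, fpcProj_of, cyclicGen, Monoid.CoprodI.lift_of, powHom_one]
    rfl
  have h2 := DFunLike.congr_fun key x
  rw [MonoidHom.comp_apply] at h2
  rw [MonoidHom.mem_ker] at hx
  rw [hx, map_one] at h2
  have h3 : QuotientGroup.mk' (Subgroup.normalClosure (fpcRels m)) x = 1 := h2.symm
  rwa [QuotientGroup.mk'_apply, QuotientGroup.eq_one_iff] at h3


lemma fpc_hopf : ⁅(⊤ : Subgroup (FreeGroup (Fin d))), ⊤⁆ ⊓ (fpcProj m).ker
    ≤ ⁅(fpcProj m).ker, (⊤ : Subgroup (FreeGroup (Fin d)))⁆ := by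
  intro x hx
  rw [Subgroup.mem_inf] at hx
  obtain ⟨hxc, hxk⟩ := hx
  set R : Subgroup (FreeGroup (Fin d)) := (fpcProj m).ker with hRdef
  set N : Subgroup (FreeGroup (Fin d)) := ⁅R, (⊤ : Subgroup (FreeGroup (Fin d)))⁆ with hNdef
  let p : FreeGroup (Fin d) →* FreeGroup (Fin d) ⧸ N := QuotientGroup.mk' N
  have hcent : ∀ r ∈ R, ∀ g, Commute (p r) (p g) := by
    intro r hr g
    rw [← commutatorElement_eq_one_iff_commute, ← map_commutatorElement]
    exact (QuotientGroup.eq_one_iff _).mpr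
      (Subgroup.commutator_mem_commutator hr (Subgroup.mem_top g))
  set c : Fin d → FreeGroup (Fin d) ⧸ N := fun i => p (FreeGroup.of i ^ m i) with hcdef
  have hcR : ∀ i, FreeGroup.of i ^ m i ∈ R := fun i => fpcRels_mem_ker m _ ⟨i, rfl⟩
  have hc_center : ∀ i, c i ∈ Subgroup.center (FreeGroup (Fin d) ⧸ N) := by
    intro i
    rw [Subgroup.mem_center_iff]
    intro g
    obtain ⟨b, rfl⟩ := QuotientGroup.mk'_surjective N g
    exact ((hcent _ (hcR i) b).symm).eq
  have hclosure_center : Subgroup.closure (Set.range c) ≤ Subgroup.center _ :=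
    (Subgroup.closure_le _).mpr (by rintro _ ⟨i, rfl⟩; exact hc_center i)
  have hnormal : (Subgroup.closure (Set.range c)).Normal := by
    constructor
    intro h hh g
    have hcen := Subgroup.mem_center_iff.mp (hclosure_center hh) g
    rwa [hcen, mul_inv_cancel_right]
  have h1 : p x ∈ Subgroup.closure (Set.range c) := by
    have hmem : p x ∈ Subgroup.map p (Subgroup.normalClosure (fpcRels m)) :=
      ⟨x, by rw [← ker_fpcProj]; exact hxk, rfl⟩
    rw [Subgroup.map_normalClosure _ _ (QuotientGroup.mk'_surjective N)] at hmem
    have himg : (p : FreeGroup (Fin d) → _) '' fpcRels m = Set.range c := by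
      rw [fpcRels, ← Set.range_comp]
      rfl
    rw [himg] at hmem
    exact Subgroup.normalClosure_le_normal Subgroup.subset_closure hmem
  have hpair : Pairwise fun i j => ∀ (u v : Multiplicative ℤ),
      Commute ((zpowersHom _ (c i)) u) ((zpowersHom _ (c j)) v) := by
    intro i j _ u v
    have hcij : Commute (c i) (c j) := Subgroup.mem_center_iff.mp (hc_center j) (c i)
    simp only [zpowersHom_apply]
    exact hcij.zpow_zpow _ _
  set β := MonoidHom.noncommPiCoprod (fun i => zpowersHom _ (c i)) hpair with hβdef
  have h2 : p x ∈ β.range := by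
    have hle : Subgroup.closure (Set.range c) ≤ β.range := by
      rw [Subgroup.closure_le]
      rintro _ ⟨i, rfl⟩
      exact ⟨Pi.mulSingle i (Multiplicative.ofAdd 1), by
        rw [hβdef, MonoidHom.noncommPiCoprod_mulSingle, zpowersHom_apply, toAdd_ofAdd, zpow_one]⟩
    exact hle h1
  obtain ⟨k, hk⟩ := h2
  set α : FreeGroup (Fin d) →* Multiplicative (Fin d → ℤ) :=
    FreeGroup.lift (fun i => Multiplicative.ofAdd (Pi.single i (1 : ℤ))) with hαdef
  have hαcomm : ⁅(⊤ : Subgroup (FreeGroup (Fin d))), ⊤⁆ ≤ α.ker := by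
    rw [Subgroup.commutator_le]
    intro a _ b _
    rw [MonoidHom.mem_ker, map_commutatorElement, commutatorElement_eq_one_iff_commute]
    exact Commute.all _ _
  have hNle : N ≤ α.ker := le_trans (Subgroup.commutator_mono le_top le_top) hαcomm
  set αbar : (FreeGroup (Fin d) ⧸ N) →* Multiplicative (Fin d → ℤ) :=
    QuotientGroup.lift N α hNle with hαbardef
  have hαbarp : ∀ g, αbar (p g) = α g := fun g => rfl
  set δ : (∀ _ : Fin d, Multiplicative ℤ) →* Multiplicative (Fin d → ℤ) :=
  { toFun := fun u => Multiplicative.ofAdd (fun j => (u j).toAdd * (m j : ℤ))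
    map_one' := by
      show Multiplicative.ofAdd _ = _
      have : (fun j => ((1 : ∀ _ : Fin d, Multiplicative ℤ) j).toAdd * (m j : ℤ))
          = (0 : Fin d → ℤ) := by
        funext j
        simp
      rw [this]
      rfl
    map_mul' := by
      intro u v
      show Multiplicative.ofAdd _ = Multiplicative.ofAdd _ * Multiplicative.ofAdd _
      rw [← ofAdd_add]
      congr 1
      funext j
      simp only [Pi.mul_apply, toAdd_mul, Pi.add_apply]
      ring } with hδdef
  have hγδ : αbar.comp β = δ := by
    apply MonoidHom.functions_ext
    intro i y
    have e1 : β (Pi.mulSingle i y) = c i ^ y.toAdd := by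
      rw [hβdef, MonoidHom.noncommPiCoprod_mulSingle, zpowersHom_apply]
    rw [MonoidHom.comp_apply, e1, map_zpow]
    have e2 : αbar (c i) = Multiplicative.ofAdd (Pi.single i (1 : ℤ)) ^ (m i) := by
      have : αbar (c i) = α (FreeGroup.of i ^ m i) := hαbarp _
      rw [this, map_pow, FreeGroup.lift_apply_of]
    rw [e2, ← zpow_natCast, ← zpow_mul, ← ofAdd_zsmul]
    have e3 : ((m i : ℤ) * y.toAdd) • Pi.single i (1 : ℤ)
        = fun j => (((Pi.mulSingle i y : ∀ _ : Fin d, Multiplicative ℤ) j).toAdd * (m j : ℤ)) := by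
      funext j
      simp only [Pi.smul_apply, Pi.single_apply, Pi.mulSingle_apply, smul_eq_mul]
      by_cases hji : j = i
      · subst hji
        simp [mul_comm]
      · simp [hji]
    rw [e3]
    rfl
  have hαx : α x = 1 := hαcomm hxc
  have hδk : δ k = 1 := by
    rw [← hγδ, MonoidHom.comp_apply, hk, hαbarp, hαx]
  have hcoord : ∀ j, ((k j).toAdd * (m j : ℤ)) = 0 := by
    intro j
    have h9 : (fun j => (k j).toAdd * (m j : ℤ)) = (0 : Fin d → ℤ) := by
      have h10 := congrArg Multiplicative.toAdd hδk
      exact h10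
    exact congrFun h9 j
  have hfactor : ∀ i, (zpowersHom _ (c i)) (k i) = 1 := by
    intro i
    rw [zpowersHom_apply]
    show p (FreeGroup.of i ^ m i) ^ (k i).toAdd = 1
    rw [← map_zpow, ← zpow_natCast, ← zpow_mul, mul_comm, hcoord i, zpow_zero, map_one]
  have hβk1 : β k = 1 := by
    have h11 : β k = Finset.univ.noncommProd (fun i => (zpowersHom _ (c i)) (k i))
        (fun _ _ _ _ h => hpair h _ _) := rfl
    rw [h11]
    exact (Finset.noncommProd_eq_pow_card _ _ _ 1 (fun i _ => hfactor i)).trans (one_pow _)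
  rw [hβk1] at hk
  have h12 : QuotientGroup.mk' N x = 1 := hk.symm
  rwa [QuotientGroup.mk'_apply, QuotientGroup.eq_one_iff] at h12

end FPC

theorem h2_of_free_product_of_cyclic_groups {d : ℕ} (m : Fin d → ℕ) :
    Subsingleton (H2Z (FreeProdCyclic m)) := by
  set G := FreeProdCyclic m with hGdef
  set π₀ : FreeGroup G →* G := FreeGroup.lift (id : G → G) with hπ₀def
  have hsurj₀ : Function.Surjective π₀ := fun g => ⟨FreeGroup.of g, by simp [hπ₀def]⟩
  have hsurj₁ := fpcProj_surjective m
  set φ : FreeGroup G →* FreeGroup (Fin d) :=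
    FreeGroup.lift (fun g => Function.surjInv hsurj₁ (π₀ (FreeGroup.of g))) with hφdef
  set ψ : FreeGroup (Fin d) →* FreeGroup G :=
    FreeGroup.lift (fun i => Function.surjInv hsurj₀ (fpcProj m (FreeGroup.of i))) with hψdef
  have hφ : (fpcProj m).comp φ = π₀ := by
    apply FreeGroup.ext_hom
    intro g
    rw [MonoidHom.comp_apply, hφdef, FreeGroup.lift_apply_of, Function.surjInv_eq hsurj₁]
  have hψ : π₀.comp ψ = fpcProj m := by
    apply FreeGroup.ext_hom
    intro i
    rw [MonoidHom.comp_apply, hψdef, FreeGroup.lift_apply_of, Function.surjInv_eq hsurj₀]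
  have key := hopf_transfer π₀ (fpcProj m) φ ψ hφ hψ (fpc_hopf m)
  have htop : ((⁅π₀.ker, (⊤ : Subgroup (FreeGroup G))⁆).subgroupOf
      (⁅(⊤ : Subgroup (FreeGroup G)), (⊤ : Subgroup (FreeGroup G))⁆ ⊓ π₀.ker)) = ⊤ :=
    Subgroup.subgroupOf_eq_top.mpr key
  show Subsingleton (_ ⧸ _)
  rw [htop]
  exact QuotientGroup.subsingleton_quotient_top
end

section
/- Universality of the Cayley periodic cover: let G be a finite group with Cayley periodic presentation 1 → R_u → F_u → G → 1 and E_u = F_u/[R_u,F_u], with induced projection π̄ : E_u → G. Then for every central extension 1 → A → Γ →p→ G → 1 (A central in Γ) and every section σ : G → Γ of p satisfying σ(g)^{o(g)} = 1 for all g ∈ G, there exists a unique group homomorphism φ : E_u → Γ with φ(f_g[R_u,F_u]) = σ(g) for all g ∈ G; moreover p∘φ = π̄. -/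
/-- The homomorphism from the cyclic group of order `orderOf g` (written multiplicatively)
to `G` sending the canonical generator to `g`. -/
noncomputable def cycHom {G : Type*} [Group G] (g : G) (hg : orderOf g ≠ 0) :
    Multiplicative (ZMod (orderOf g)) →* G where
  toFun x := g ^ (haveI : NeZero (orderOf g) := ⟨hg⟩; (Multiplicative.toAdd x).val)
  map_one' := by
    haveI : NeZero (orderOf g) := ⟨hg⟩
    show g ^ (Multiplicative.toAdd (1 : Multiplicative (ZMod (orderOf g)))).val = 1
    simp
  map_mul' x y := by
    haveI : NeZero (orderOf g) := ⟨hg⟩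
    show g ^ (Multiplicative.toAdd (x * y)).val = _ * _
    rw [← pow_add, pow_eq_pow_iff_modEq, toAdd_mul, ZMod.val_add]
    exact Nat.mod_modEq _ _

/-- The free product `F_u = ∗_{g ∈ G} ⟨f_g⟩` of cyclic groups of orders `o(g)`, `g ∈ G`,
underlying the Cayley periodic presentation of the finite group `G`. -/
abbrev CayleyFreeProd (G : Type*) [Group G] : Type _ :=
  FreeProdCyclic (fun g : G => orderOf g)

/-- The canonical projection `F_u → G` of the Cayley periodic presentation, `f_g ↦ g`. -/
noncomputable def cayleyProj (G : Type*) [Group G] [Finite G] : CayleyFreeProd G →* G :=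
  Monoid.CoprodI.lift (fun g : G => cycHom g (orderOf_pos g).ne')

/-- The cover `E_u = F_u/[R_u,F_u]` afforded by the Cayley periodic presentation. -/
abbrev CayleyCover (G : Type*) [Group G] [Finite G] : Type _ :=
  CayleyFreeProd G ⧸ ⁅(cayleyProj G).ker, (⊤ : Subgroup (CayleyFreeProd G))⁆

/-- The induced projection `π̄ : E_u = F_u/[R_u,F_u] → G`. -/
noncomputable def cayleyCoverProj (G : Type*) [Group G] [Finite G] : CayleyCover G →* G :=
  QuotientGroup.lift _ (cayleyProj G)
    (fun x hx => MonoidHom.mem_ker.mp (Subgroup.commutator_le_left _ _ hx))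

section Aux

variable {Γ : Type*} [Group Γ]

theorem pow_mod_of_pow_eq_one {n : ℕ} {h : Γ} (hh : h ^ n = 1) (a : ℕ) :
    h ^ (a % n) = h ^ a := by
  conv_rhs => rw [← Nat.mod_add_div a n, pow_add, pow_mul, hh, one_pow, mul_one]

/-- The homomorphism from the cyclic group of order `n` to `Γ` sending the canonical
generator to an element `h` with `h ^ n = 1`. -/
noncomputable def zmodHom (n : ℕ) [NeZero n] (h : Γ) (hh : h ^ n = 1) :
    Multiplicative (ZMod n) →* Γ where
  toFun x := h ^ (Multiplicative.toAdd x).val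
  map_one' := by
    show h ^ (Multiplicative.toAdd (1 : Multiplicative (ZMod n))).val = 1
    rw [toAdd_one, ZMod.val_zero, pow_zero]
  map_mul' x y := by
    show h ^ (Multiplicative.toAdd (x * y)).val = _ * _
    have hd : orderOf h ∣ n := orderOf_dvd_of_pow_eq_one hh
    rw [← pow_add, pow_eq_pow_iff_modEq, toAdd_mul, ZMod.val_add]
    exact (Nat.mod_modEq _ _).of_dvd hd

theorem pow_val_one {n : ℕ} [NeZero n] {h : Γ} (hh : h ^ n = 1) :
    h ^ (1 : ZMod n).val = h := by
  rw [ZMod.val_one_eq_one_mod, pow_mod_of_pow_eq_one hh, pow_one]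

theorem zmodHom_gen (n : ℕ) [NeZero n] (h : Γ) (hh : h ^ n = 1) :
    zmodHom n h hh (Multiplicative.ofAdd 1) = h := by
  show h ^ (Multiplicative.toAdd (Multiplicative.ofAdd (1 : ZMod n))).val = h
  rw [toAdd_ofAdd]
  exact pow_val_one hh

theorem cycHom_gen {G : Type*} [Group G] (g : G) (hg : orderOf g ≠ 0) :
    cycHom g hg (Multiplicative.ofAdd 1) = g := by
  haveI : NeZero (orderOf g) := ⟨hg⟩
  show g ^ (Multiplicative.toAdd (Multiplicative.ofAdd (1 : ZMod (orderOf g)))).val = g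
  rw [toAdd_ofAdd]
  exact pow_val_one (pow_orderOf_eq_one g)

theorem zmod_hom_ext {n : ℕ} [NeZero n] {H : Type*} [Monoid H]
    {f g : Multiplicative (ZMod n) →* H}
    (h : f (Multiplicative.ofAdd 1) = g (Multiplicative.ofAdd 1)) : f = g := by
  apply MonoidHom.ext; intro x
  have hx : x = (Multiplicative.ofAdd (1 : ZMod n)) ^ (Multiplicative.toAdd x).val := by
    rw [← ofAdd_nsmul, nsmul_eq_mul, mul_one, ZMod.natCast_zmod_val, ofAdd_toAdd]
  rw [hx, map_pow, map_pow, h]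

end Aux

/-!
STATEMENT 7 (Universality of the Cayley periodic cover): let `G` be a finite group with
Cayley periodic presentation `1 → R_u → F_u → G → 1` and `E_u = F_u/[R_u,F_u]`, with
induced projection `π̄ : E_u → G`.  Then for every central extension `1 → A → Γ →p→ G → 1`
(`A = ker p` central in `Γ`) and every section `σ : G → Γ` of `p` satisfying
`σ(g)^{o(g)} = 1` for all `g ∈ G`, there exists a unique group homomorphism `φ : E_u → Γ`
with `φ(f_g[R_u,F_u]) = σ(g)` for all `g ∈ G`; moreover `p ∘ φ = π̄`.
-/
theorem cayley_cover_universal (G : Type*) [Group G] [Finite G]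
    (Γ : Type*) [Group Γ] (p : Γ →* G) (hsurj : Function.Surjective p)
    (hcentral : p.ker ≤ Subgroup.center Γ)
    (σ : G → Γ) (hsec : ∀ g : G, p (σ g) = g)
    (hord : ∀ g : G, σ g ^ orderOf g = 1) :
    (∃! φ : CayleyCover G →* Γ,
      ∀ g : G,
        φ (QuotientGroup.mk' ⁅(cayleyProj G).ker, (⊤ : Subgroup (CayleyFreeProd G))⁆
            (cyclicGen (fun g : G => orderOf g) g)) = σ g) ∧
    (∀ φ : CayleyCover G →* Γ,
      (∀ g : G,
        φ (QuotientGroup.mk' ⁅(cayleyProj G).ker, (⊤ : Subgroup (CayleyFreeProd G))⁆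
            (cyclicGen (fun g : G => orderOf g) g)) = σ g) →
      p.comp φ = cayleyCoverProj G) := by
  classical
  haveI : ∀ g : G, NeZero (orderOf g) := fun g => ⟨(orderOf_pos g).ne'⟩
  set N := ⁅(cayleyProj G).ker, (⊤ : Subgroup (CayleyFreeProd G))⁆ with hN
  -- the lift on `F_u`
  let ψ : CayleyFreeProd G →* Γ :=
    Monoid.CoprodI.lift (fun g : G => zmodHom (orderOf g) (σ g) (hord g))
  have hψgen : ∀ g : G, ψ (cyclicGen (fun g : G => orderOf g) g) = σ g := fun g => by
    rw [cyclicGen, Monoid.CoprodI.lift_of, zmodHom_gen]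
  have hproj : ∀ g : G, cayleyProj G (cyclicGen (fun g : G => orderOf g) g) = g := fun g => by
    rw [cyclicGen, cayleyProj, Monoid.CoprodI.lift_of, cycHom_gen]
  have hpψ : p.comp ψ = cayleyProj G := by
    apply Monoid.CoprodI.ext_hom
    intro g
    apply zmod_hom_ext
    show p (ψ (Monoid.CoprodI.of (Multiplicative.ofAdd 1))) =
      cayleyProj G (Monoid.CoprodI.of (Multiplicative.ofAdd 1))
    rw [show (Monoid.CoprodI.of (Multiplicative.ofAdd (1 : ZMod (orderOf g))) :
        CayleyFreeProd G) = cyclicGen (fun g : G => orderOf g) g from rfl,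
      hψgen, hproj, hsec]
  have hker : N ≤ ψ.ker := by
    rw [hN, Subgroup.commutator_le]
    intro r hr f _
    have hrc : ψ r ∈ Subgroup.center Γ := by
      apply hcentral
      rw [MonoidHom.mem_ker, ← MonoidHom.comp_apply, hpψ]
      exact hr
    rw [MonoidHom.mem_ker, map_commutatorElement]
    exact commutatorElement_eq_one_iff_commute.mpr
      (Subgroup.mem_center_iff.mp hrc (ψ f)).symm
  let φ : CayleyCover G →* Γ := QuotientGroup.lift N ψ hker
  have hφ : ∀ g : G, φ (QuotientGroup.mk' N (cyclicGen (fun g : G => orderOf g) g)) = σ g :=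
    fun g => hψgen g
  have huniq : ∀ φ' : CayleyCover G →* Γ,
      (∀ g : G, φ' (QuotientGroup.mk' N (cyclicGen (fun g : G => orderOf g) g)) = σ g) →
      φ' = φ := by
    intro φ' hφ'
    apply QuotientGroup.monoidHom_ext
    apply Monoid.CoprodI.ext_hom
    intro g
    apply zmod_hom_ext
    show φ' (QuotientGroup.mk' N (Monoid.CoprodI.of (Multiplicative.ofAdd 1))) =
      φ (QuotientGroup.mk' N (Monoid.CoprodI.of (Multiplicative.ofAdd 1)))
    rw [show (Monoid.CoprodI.of (Multiplicative.ofAdd (1 : ZMod (orderOf g))) :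
        CayleyFreeProd G) = cyclicGen (fun g : G => orderOf g) g from rfl,
      hφ', hφ]
  refine ⟨⟨φ, hφ, huniq⟩, ?_⟩
  intro φ' hφ'
  apply QuotientGroup.monoidHom_ext
  apply Monoid.CoprodI.ext_hom
  intro g
  apply zmod_hom_ext
  show p (φ' (QuotientGroup.mk' N (Monoid.CoprodI.of (Multiplicative.ofAdd 1)))) =
    cayleyCoverProj G (QuotientGroup.mk' N (Monoid.CoprodI.of (Multiplicative.ofAdd 1)))
  rw [show (Monoid.CoprodI.of (Multiplicative.ofAdd (1 : ZMod (orderOf g))) :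
      CayleyFreeProd G) = cyclicGen (fun g : G => orderOf g) g from rfl, hφ', hsec]
  exact (hproj g).symm
end

section
/- Let G be a finite group whose abelianization G/[G,G] is not cyclic, and let 1 → R → F → G → 1 be a periodic presentation of G. Then for every k ≥ 0 the subgroup [R,_{k+1}F] is properly contained in [R,_kF]; in particular [R,F] is a proper subgroup of R, the orders of the finite groups F/[R,_kF] strictly increase with k, and the profinite cover E_∞ = lim←_k F/[R,_kF] is an infinite profinite group. -/
/-- Iterated commutator subgroups: `[R,₀F] = R` and `[R,_{k+1}F] = [[R,_kF],F]`. -/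
def iterComm {F : Type*} [Group F] (R : Subgroup F) : ℕ → Subgroup F
  | 0 => R
  | k + 1 => ⁅iterComm R k, (⊤ : Subgroup F)⁆

instance iterComm_normal {F : Type*} [Group F] (R : Subgroup F) [hR : R.Normal] (k : ℕ) :
    (iterComm R k).Normal := by
  induction k with
  | zero => exact hR
  | succ k ih => exact @Subgroup.commutator_normal _ _ _ _ ih _

/-- The transition homomorphism `F/[R,_{k+1}F] →* F/[R,_kF]`. -/
def iterCommTrans {F : Type*} [Group F] (R : Subgroup F) [R.Normal] (k : ℕ) :
    F ⧸ iterComm R (k + 1) →* F ⧸ iterComm R k :=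
  QuotientGroup.map _ _ (MonoidHom.id F)
    (by simpa [iterComm] using Subgroup.commutator_le_left (iterComm R k) (⊤ : Subgroup F))

/-- The profinite cover `E_∞ = lim← F/[R,_kF]` associated to a presentation with kernel
`R`, realized as the subgroup of compatible families inside `∀ k, F/[R,_kF]`. -/
def profiniteCover {F : Type*} [Group F] (R : Subgroup F) [R.Normal] :
    Subgroup (∀ k : ℕ, F ⧸ iterComm R k) where
  carrier := {x | ∀ k, iterCommTrans R k (x (k + 1)) = x k}
  one_mem' := by intro k; simp
  mul_mem' := by intro a b ha hb k; simp only [Pi.mul_apply, map_mul, ha k, hb k]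
  inv_mem' := by intro a ha k; simp only [Pi.inv_apply, map_inv, ha k]


/-- Homomorphism from `ZMod k` (multiplicative) to a group, sending `1` to a fixed element
`x` with `x ^ k = 1`. -/
def genHom {W : Type*} [Group W] (k : ℕ) [NeZero k] (x : W) (hx : x ^ k = 1) :
    Multiplicative (ZMod k) →* W where
  toFun c := x ^ (Multiplicative.toAdd c).val
  map_one' := by simp [ZMod.val_zero]
  map_mul' a b := by
    have hd : orderOf x ∣ k := orderOf_dvd_of_pow_eq_one hx
    show x ^ ((Multiplicative.toAdd a + Multiplicative.toAdd b).val) = _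
    rw [ZMod.val_add, ← pow_add]
    exact pow_eq_pow_iff_modEq.mpr ((Nat.mod_modEq _ _).of_dvd hd)

theorem genHom_apply_one {W : Type*} [Group W] (k : ℕ) [NeZero k] (hk : 1 < k) (x : W)
    (hx : x ^ k = 1) :
    genHom k x hx (Multiplicative.ofAdd 1) = x := by
  show x ^ (Multiplicative.toAdd (Multiplicative.ofAdd (1 : ZMod k))).val = x
  rw [toAdd_ofAdd, ZMod.val_one_eq_one_mod, Nat.mod_eq_of_lt hk, pow_one]


section Wgroup

open SemidirectProduct

variable (p n : ℕ)

/-- The shift automorphism of `(ZMod p → ZMod (p^n))` (written multiplicatively). -/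
def shiftAut (c : ZMod p) : MulAut (Multiplicative (ZMod p → ZMod (p ^ n))) where
  toFun g := Multiplicative.ofAdd fun x => Multiplicative.toAdd g (x + c)
  invFun g := Multiplicative.ofAdd fun x => Multiplicative.toAdd g (x - c)
  left_inv g := by
    apply Multiplicative.toAdd.injective
    funext x; simp
  right_inv g := by
    apply Multiplicative.toAdd.injective
    funext x; simp
  map_mul' g h := rfl

@[simp] theorem toAdd_shiftAut (c : ZMod p) (g : Multiplicative (ZMod p → ZMod (p ^ n)))
    (x : ZMod p) :
    Multiplicative.toAdd (shiftAut p n c g) x = Multiplicative.toAdd g (x + c) := rfl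

/-- The shift action of `ZMod p` on `(ZMod p → ZMod (p^n))`. -/
def shiftHom : Multiplicative (ZMod p) →* MulAut (Multiplicative (ZMod p → ZMod (p ^ n))) where
  toFun c := shiftAut p n (Multiplicative.toAdd c)
  map_one' := by
    refine MulEquiv.ext fun g => ?_
    apply Multiplicative.toAdd.injective
    funext x
    simp
  map_mul' c c' := by
    refine MulEquiv.ext fun g => ?_
    apply Multiplicative.toAdd.injective
    funext x
    show Multiplicative.toAdd g _ = Multiplicative.toAdd ((shiftAut p n _) ((shiftAut p n _) g)) x
    simp only [toAdd_shiftAut, toAdd_mul]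
    congr 1
    abel

/-- The wreath-like `p`-group `(ZMod (p^n))^(ZMod p) ⋊ ZMod p`. -/
abbrev Wgrp : Type _ :=
  (Multiplicative (ZMod p → ZMod (p ^ n))) ⋊[shiftHom p n] Multiplicative (ZMod p)

/-- first generator: the shift -/
def wT : Wgrp p n := inr (Multiplicative.ofAdd (1 : ZMod p))

/-- the auxiliary translation element -/
def wA : Wgrp p n := inl (Multiplicative.ofAdd (Pi.single (0 : ZMod p) (1 : ZMod (p ^ n))))

/-- second generator: a conjugate of the shift -/
def wU : Wgrp p n := wA p n * wT p n * (wA p n)⁻¹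

theorem wT_pow : wT p n ^ p = 1 := by
  rw [wT, ← map_pow, ← ofAdd_nsmul]
  simp

theorem wU_pow : wU p n ^ p = 1 := by
  have : wU p n = MulAut.conj (wA p n) (wT p n) := rfl
  rw [this, ← map_pow, wT_pow, map_one]

/-- The vector `δ₀ - shift δ₀`. -/
def vW : ZMod p → ZMod (p ^ n) := fun x =>
  (Pi.single (0 : ZMod p) (1 : ZMod (p ^ n)) : ZMod p → ZMod (p ^ n)) x
    - (Pi.single (0 : ZMod p) (1 : ZMod (p ^ n)) : ZMod p → ZMod (p ^ n)) (x + 1)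

/-- The element `w = u * t⁻¹`, of order divisible by `p ^ n`. -/
def wW : Wgrp p n := wU p n * (wT p n)⁻¹

theorem wW_eq : wW p n = inl (Multiplicative.ofAdd (vW p n)) := by
  have h : wT p n * (wA p n)⁻¹ * (wT p n)⁻¹
      = inl ((shiftHom p n (Multiplicative.ofAdd (1 : ZMod p)))
          (Multiplicative.ofAdd (Pi.single (0 : ZMod p) (1 : ZMod (p ^ n))))⁻¹) := by
    rw [wT, wA, ← map_inv, inl_aut]
    simp
  rw [wW, wU, mul_assoc, mul_assoc, ← mul_assoc (wT p n) ((wA p n)⁻¹), h, wA, ← map_mul]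
  congr 1
  apply Multiplicative.toAdd.injective
  funext x
  show (Pi.single (0 : ZMod p) (1 : ZMod (p ^ n)) : ZMod p → ZMod (p ^ n)) x
      + (-((Pi.single (0 : ZMod p) (1 : ZMod (p ^ n)) : ZMod p → ZMod (p ^ n)) (x + 1)))
      = vW p n x
  rw [vW, sub_eq_add_neg]

theorem pow_dvd_orderOf_wW [Fact (Nat.Prime p)] : p ^ n ∣ orderOf (wW p n) := by
  haveI : Fact (1 < p) := ⟨(Fact.out (p := Nat.Prime p)).one_lt⟩
  rw [wW_eq, orderOf_injective inl inl_injective, orderOf_ofAdd_eq_addOrderOf]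
  have h0 : vW p n 0 = 1 := by
    have h1 : (0 : ZMod p) + 1 ≠ 0 := by simp
    simp [vW, Pi.single_apply, h1]
  have hdvd := addOrderOf_map_dvd (Pi.evalAddMonoidHom (fun _ : ZMod p => ZMod (p ^ n)) 0) (vW p n)
  rw [Pi.evalAddMonoidHom_apply, h0, ZMod.addOrderOf_one] at hdvd
  exact hdvd

/-- A semidirect product is in bijection with the product of its factors. -/
def sdpEquivProd {N G : Type*} [Group N] [Group G] {φ : G →* MulAut N} : N ⋊[φ] G ≃ N × G where
  toFun w := (w.left, w.right)
  invFun q := ⟨q.1, q.2⟩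
  left_inv w := rfl
  right_inv q := rfl

theorem card_Wgrp [Fact p.Prime] : Nat.card (Wgrp p n) = p ^ (n * p + 1) := by
  haveI : NeZero p := ⟨(Fact.out (p := p.Prime)).pos.ne'⟩
  rw [Nat.card_congr (sdpEquivProd), Nat.card_prod,
    Nat.card_congr (Multiplicative.toAdd (α := ZMod p → ZMod (p ^ n))),
    Nat.card_congr (Multiplicative.toAdd (α := ZMod p)),
    Nat.card_fun, Nat.card_zmod, Nat.card_zmod, ← pow_mul, ← pow_succ]

instance [Fact p.Prime] : Finite (Wgrp p n) := by
  have h := card_Wgrp p n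
  exact Nat.finite_of_card_ne_zero (by
    rw [h]; exact pow_ne_zero _ (Fact.out (p := p.Prime)).pos.ne')

theorem isPGroup_Wgrp [Fact p.Prime] : IsPGroup p (Wgrp p n) :=
  IsPGroup.of_card (card_Wgrp p n)

theorem isNilpotent_Wgrp [Fact p.Prime] : Group.IsNilpotent (Wgrp p n) :=
  (isPGroup_Wgrp p n).isNilpotent

end Wgroup

theorem cyclicGen_pow {ι : Type*} (m : ι → ℕ) (i : ι) : cyclicGen m i ^ (m i) = 1 := by
  rw [cyclicGen, ← map_pow, ← ofAdd_nsmul]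
  simp

theorem of_eq_pow_cyclicGen {ι : Type*} (m : ι → ℕ) (hm : ∀ i, m i ≠ 0) (i : ι)
    (x : Multiplicative (ZMod (m i))) :
    (Monoid.CoprodI.of x : FreeProdCyclic m) = cyclicGen m i ^ (Multiplicative.toAdd x).val := by
  haveI : NeZero (m i) := ⟨hm i⟩
  rw [cyclicGen, ← map_pow, ← ofAdd_nsmul, nsmul_eq_mul, mul_one, ZMod.natCast_val,
    ZMod.cast_id]
  rfl

theorem closure_range_cyclicGen {ι : Type*} (m : ι → ℕ) (hm : ∀ i, m i ≠ 0) :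
    Subgroup.closure (Set.range (cyclicGen m)) = ⊤ := by
  rw [eq_top_iff]
  have key : ∀ x : FreeProdCyclic m, x ∈ Subgroup.closure (Set.range (cyclicGen m)) := by
    intro x
    induction x using Monoid.CoprodI.induction_on with
    | one => exact one_mem _
    | of i x =>
        rw [of_eq_pow_cyclicGen m hm i x]
        exact pow_mem (Subgroup.subset_closure (Set.mem_range_self i)) _
    | mul x y hx hy => exact mul_mem hx hy
  exact fun x _ => key x


theorem isCyclic_of_coprime_gens {A : Type*} [CommGroup A] [Finite A] {d : ℕ} {m : Fin d → ℕ}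
    (g : Fin d → A) (hgen : Subgroup.closure (Set.range g) = ⊤)
    (hord : ∀ i, g i ^ m i = 1)
    (hcop : ∀ i j, i ≠ j → Nat.Coprime (m i) (m j)) : IsCyclic A := by
  classical
  set x := ∏ i, g i with hx
  refine ⟨⟨x, fun y => ?_⟩⟩
  have hsub : Subgroup.closure (Set.range g) ≤ Subgroup.zpowers x := by
    rw [Subgroup.closure_le]
    rintro _ ⟨i, rfl⟩
    haveI : NeZero (orderOf (g i)) := ⟨(orderOf_pos (g i)).ne'⟩
    set P := ∏ j ∈ Finset.univ.erase i, orderOf (g j) with hP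
    have h1 : x ^ P = g i ^ P := by
      rw [hx, ← Finset.prod_pow]
      refine Finset.prod_eq_single i (fun j _ hj => ?_) (by simp)
      rw [← orderOf_dvd_iff_pow_eq_one]
      exact Finset.dvd_prod_of_mem _ (Finset.mem_erase.mpr ⟨hj, Finset.mem_univ j⟩)
    have hcoP : Nat.Coprime P (orderOf (g i)) := by
      refine Nat.Coprime.prod_left (fun j hj => ?_)
      have hji : j ≠ i := (Finset.mem_erase.mp hj).1
      exact Nat.Coprime.coprime_dvd_left (orderOf_dvd_of_pow_eq_one (hord j))
        (Nat.Coprime.coprime_dvd_right (orderOf_dvd_of_pow_eq_one (hord i)) (hcop j i hji))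
    set a := ((P : ZMod (orderOf (g i)))⁻¹).val with ha
    have hmod : P * a ≡ 1 [MOD orderOf (g i)] := by
      have := ZMod.coe_mul_inv_eq_one (n := orderOf (g i)) P hcoP
      rw [← ZMod.natCast_eq_natCast_iff]
      push_cast
      rw [ha, ZMod.natCast_val, ZMod.cast_id]
      simpa using this
    have h2 : g i ^ (P * a) = g i := by
      conv_rhs => rw [← pow_one (g i)]
      rw [pow_eq_pow_iff_modEq]
      exact hmod
    refine Subgroup.mem_zpowers_iff.mpr ⟨((P * a : ℕ) : ℤ), ?_⟩
    rw [zpow_natCast, pow_mul, h1, ← pow_mul, h2]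
  have := hgen ▸ hsub
  exact this (Subgroup.mem_top y)


theorem abelianization_of_surjective {G : Type*} [Group G] :
    Function.Surjective (Abelianization.of : G → Abelianization G) := fun y =>
  Quotient.inductionOn' y fun g => ⟨g, rfl⟩

/-- If the abelianization of `G` is not cyclic, two of the `m i` share a prime factor. -/
theorem exists_common_prime {d : ℕ} (m : Fin d → ℕ) (hm : ∀ i, m i ≠ 0)
    {G : Type*} [Group G] [Finite G] (hnc : ¬ IsCyclic (Abelianization G))
    (π : FreeProdCyclic m →* G) (hsurj : Function.Surjective π) :
    ∃ (p : ℕ) (i j : Fin d), p.Prime ∧ i ≠ j ∧ p ∣ m i ∧ p ∣ m j := by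
  by_contra hcon
  push_neg at hcon
  have hcop : ∀ i j, i ≠ j → Nat.Coprime (m i) (m j) := by
    intro i j hij
    by_contra hc
    obtain ⟨p, hp, hpd⟩ := Nat.exists_prime_and_dvd hc
    exact hcon p i j hp hij (hpd.trans (Nat.gcd_dvd_left _ _)) (hpd.trans (Nat.gcd_dvd_right _ _))
  apply hnc
  set f := (Abelianization.of (G := G)).comp π with hf
  have hfsurj : Function.Surjective f := (abelianization_of_surjective).comp hsurj
  refine isCyclic_of_coprime_gens (m := m) (fun i => f (cyclicGen m i)) ?_ ?_ hcop
  · have h1 := closure_range_cyclicGen m hm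
    have h2 : Subgroup.map f ⊤ = ⊤ := Subgroup.map_top_of_surjective f hfsurj
    rw [← h1, MonoidHom.map_closure, ← Set.range_comp] at h2
    exact h2
  · intro i
    rw [← map_pow, cyclicGen_pow, map_one]

section Core

variable {d : ℕ} (m : Fin d → ℕ)

/-- Choice of homomorphisms on the cyclic free factors. -/
def theFi (hm : ∀ i', m i' ≠ 0) (p n : ℕ) (i j : Fin d)
    (hti : wT p n ^ m i = 1) (huj : wU p n ^ m j = 1) :
    ∀ i', Multiplicative (ZMod (m i')) →* Wgrp p n := fun i' =>
  if h : i' = i then @genHom _ _ (m i') ⟨hm i'⟩ (wT p n) (by rw [h]; exact hti)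
  else if h' : i' = j then @genHom _ _ (m i') ⟨hm i'⟩ (wU p n) (by rw [h']; exact huj)
  else 1

theorem false_of_commutator_self (hm : ∀ i', m i' ≠ 0)
    {p : ℕ} (hp : p.Prime) {i j : Fin d} (hij : i ≠ j) (hpi : p ∣ m i) (hpj : p ∣ m j)
    (S : Subgroup (FreeProdCyclic m)) (hfin : Finite (FreeProdCyclic m ⧸ S))
    (hS : ⁅S, (⊤ : Subgroup (FreeProdCyclic m))⁆ = S) : False := by
  haveI : Fact p.Prime := ⟨hp⟩
  set n := S.index with hn
  have hNnz : S.index ≠ 0 := Subgroup.index_ne_zero_of_finite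
  have h1mi : 1 < m i := lt_of_lt_of_le hp.one_lt (Nat.le_of_dvd (Nat.pos_of_ne_zero (hm i)) hpi)
  have h1mj : 1 < m j := lt_of_lt_of_le hp.one_lt (Nat.le_of_dvd (Nat.pos_of_ne_zero (hm j)) hpj)
  -- orders of the two designated generators
  obtain ⟨ci, hci⟩ := hpi
  obtain ⟨cj, hcj⟩ := hpj
  have hti : wT p n ^ m i = 1 := by rw [hci, pow_mul, wT_pow, one_pow]
  have huj : wU p n ^ m j = 1 := by rw [hcj, pow_mul, wU_pow, one_pow]
  haveI : NeZero (m i) := ⟨hm i⟩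
  haveI : NeZero (m j) := ⟨hm j⟩
  set Φ := Monoid.CoprodI.lift (theFi m hm p n i j hti huj) with hΦ
  have hΦi : Φ (cyclicGen m i) = wT p n := by
    rw [cyclicGen, hΦ, Monoid.CoprodI.lift_of, theFi, dif_pos rfl]
    exact genHom_apply_one _ h1mi _ _
  have hΦj : Φ (cyclicGen m j) = wU p n := by
    rw [cyclicGen, hΦ, Monoid.CoprodI.lift_of, theFi, dif_neg hij.symm, dif_pos rfl]
    exact genHom_apply_one _ h1mj _ _
  have hrange : wW p n ∈ Φ.range :=
    ⟨cyclicGen m j * (cyclicGen m i)⁻¹, by rw [map_mul, map_inv, hΦi, hΦj]; rfl⟩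
  -- S is contained in every term of the lower central series
  have hls : ∀ c, S ≤ lowerCentralSeries (⊤ : Subgroup (FreeProdCyclic m)) c := by
    intro c
    induction c with
    | zero => exact le_top
    | succ c ih =>
        conv_lhs => rw [← hS]
        exact Subgroup.commutator_mono ih le_top
  -- S is in the kernel of Φ
  haveI hWnil : Group.IsNilpotent (Wgrp p n) := isNilpotent_Wgrp p n
  have hker : S ≤ Φ.ker := by
    intro x hx
    have h2 : Φ x ∈ Subgroup.map Φ (lowerCentralSeries (⊤ : Subgroup (FreeProdCyclic m))
        (Group.nilpotencyClass (Wgrp p n))) :=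
      Subgroup.mem_map_of_mem Φ (hls _ hx)
    have h3 := lowerCentralSeries.map Φ (Group.nilpotencyClass (Wgrp p n)) h2
    rw [lowerCentralSeries_nilpotencyClass, Subgroup.mem_bot] at h3
    exact h3
  -- cardinality bounds
  have hcard1 : Nat.card Φ.range ≤ S.index := by
    have he : Nat.card Φ.range = Φ.ker.index := by
      rw [Subgroup.index_eq_card]
      exact (Nat.card_congr (QuotientGroup.quotientKerEquivRange Φ).toEquiv).symm
    rw [he]
    exact Nat.le_of_dvd (Nat.pos_of_ne_zero hNnz) (Subgroup.index_dvd_of_le hker)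
  have hcard2 : p ^ n ≤ Nat.card Φ.range := by
    have hw : orderOf (⟨wW p n, hrange⟩ : Φ.range) = orderOf (wW p n) :=
      (orderOf_injective Φ.range.subtype Subtype.coe_injective ⟨wW p n, hrange⟩).symm
    have hdvd : p ^ n ∣ Nat.card Φ.range := by
      refine (pow_dvd_orderOf_wW p n).trans ?_
      rw [← hw]
      exact orderOf_dvd_natCard _
    refine Nat.le_of_dvd ?_ hdvd
    exact Nat.card_pos
  have hlt : S.index < p ^ n := by
    calc S.index < 2 ^ S.index := Nat.lt_two_pow_self
      _ ≤ p ^ S.index := Nat.pow_le_pow_left hp.two_le _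
  omega

end Core

section Finiteness

open scoped commutatorElement

/-- Commutators are unchanged by central shifts. -/
theorem commutator_central_shift {E : Type*} [Group E] (a b z w : E)
    (hz : z ∈ Subgroup.center E) (hw : w ∈ Subgroup.center E) :
    ⁅a * z, b * w⁆ = ⁅a, b⁆ := by
  have key : ∀ c g x : E, g ∈ Subgroup.center E → c * g * x * (c * g)⁻¹ = c * x * c⁻¹ := by
    intro c g x hg
    have hgx := Subgroup.mem_center_iff.mp hg x
    have h1 : c * g * x * (c * g)⁻¹ = c * (g * x * g⁻¹) * c⁻¹ := by group
    rw [h1, ← hgx, mul_inv_cancel_right]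
  have lem1 : ∀ a' z' b' : E, z' ∈ Subgroup.center E → ⁅a' * z', b'⁆ = ⁅a', b'⁆ := by
    intro a' z' b' hz'
    rw [commutatorElement_def, commutatorElement_def, key a' z' b' hz']
  calc ⁅a * z, b * w⁆ = ⁅b * w, a * z⁆⁻¹ := by rw [commutatorElement_inv]
    _ = ⁅b, a * z⁆⁻¹ := by rw [lem1 b w _ hw]
    _ = ⁅a * z, b⁆ := by rw [commutatorElement_inv]
    _ = ⁅a, b⁆ := lem1 a z b hz

/-- A commutative group generated by finitely many elements of finite order is finite. -/
theorem finite_of_torsion_gens {A : Type*} [CommGroup A] {d : ℕ} {m : Fin d → ℕ}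
    (hm : ∀ i, m i ≠ 0) (g : Fin d → A) (hgen : Subgroup.closure (Set.range g) = ⊤)
    (hord : ∀ i, g i ^ m i = 1) : Finite A := by
  classical
  haveI hNZ : ∀ i', NeZero (m i') := fun i' => ⟨hm i'⟩
  haveI : ∀ i', Finite (Multiplicative (ZMod (m i'))) := fun i' => by
    exact Finite.of_equiv _ (Multiplicative.ofAdd (α := ZMod (m i')))
  set χ : (∀ i', Multiplicative (ZMod (m i'))) →* A :=
    MonoidHom.noncommPiCoprod (fun i' => @genHom _ _ (m i') ⟨hm i'⟩ (g i') (hord i'))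
      (by intro i j _ x y; exact Commute.all _ _) with hχ
  have hrange : ∀ i, g i ∈ χ.range := by
    intro i
    rcases eq_or_lt_of_le (Nat.one_le_iff_ne_zero.mpr (hm i)) with h1 | h1
    · have hgi : g i = 1 := by have h := hord i; rw [← h1, pow_one] at h; exact h
      rw [hgi]; exact one_mem _
    · refine ⟨Pi.mulSingle i (Multiplicative.ofAdd 1), ?_⟩
      rw [hχ]
      exact (MonoidHom.noncommPiCoprod_mulSingle _ _ _).trans (genHom_apply_one _ h1 _ _)
  have hsurj : Function.Surjective χ := by
    rw [← MonoidHom.range_eq_top]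
    rw [eq_top_iff, ← hgen, Subgroup.closure_le]
    rintro _ ⟨i, rfl⟩
    exact hrange i
  exact Finite.of_surjective χ hsurj

/-- One step of the finiteness induction: if `F/S` is finite then so is `F/[S,F]`. -/
theorem finite_quotient_commutator {d : ℕ} (m : Fin d → ℕ) (hm : ∀ i, m i ≠ 0)
    (S : Subgroup (FreeProdCyclic m)) [S.Normal]
    [hfin : Finite (FreeProdCyclic m ⧸ S)] :
    Finite (FreeProdCyclic m ⧸ (⁅S, (⊤ : Subgroup (FreeProdCyclic m))⁆ :
      Subgroup (FreeProdCyclic m))) := by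
  classical
  set C : Subgroup (FreeProdCyclic m) := ⁅S, (⊤ : Subgroup (FreeProdCyclic m))⁆ with hC
  have hCS : C ≤ S := Subgroup.commutator_le_left S ⊤
  set mkC := QuotientGroup.mk' C with hmkC
  set Z : Subgroup (FreeProdCyclic m ⧸ C) := S.map mkC with hZ
  -- Z is central
  have hZc : Z ≤ Subgroup.center (FreeProdCyclic m ⧸ C) := by
    rintro _ ⟨s, hs, rfl⟩
    rw [Subgroup.mem_center_iff]
    intro e
    obtain ⟨f, rfl⟩ := QuotientGroup.mk'_surjective C e
    rw [← map_mul, ← map_mul]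
    apply QuotientGroup.eq.mpr
    have : (f * s)⁻¹ * (s * f) = ⁅s⁻¹, f⁻¹⁆ := by group
    rw [this]
    exact Subgroup.commutator_mem_commutator (S.inv_mem hs) (Subgroup.mem_top _)
  -- the quotient by Z is finite
  haveI hfinZ : Finite ((FreeProdCyclic m ⧸ C) ⧸ Z) :=
    Finite.of_equiv _ (QuotientGroup.quotientQuotientEquivQuotient C S hCS).symm.toEquiv
  haveI : Z.FiniteIndex := Subgroup.finiteIndex_of_finite_quotient
  haveI : (Subgroup.center (FreeProdCyclic m ⧸ C)).FiniteIndex := Subgroup.finiteIndex_of_le hZc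
  -- finitely many commutators
  haveI hcs : Finite (commutatorSet (FreeProdCyclic m ⧸ C)) := by
    have hsub : commutatorSet (FreeProdCyclic m ⧸ C) ⊆ Set.range
        (fun q : ((FreeProdCyclic m ⧸ C) ⧸ Subgroup.center (FreeProdCyclic m ⧸ C)) ×
          ((FreeProdCyclic m ⧸ C) ⧸ Subgroup.center (FreeProdCyclic m ⧸ C)) => ⁅q.1.out, q.2.out⁆) := by
      rintro _ ⟨g1, g2, rfl⟩
      refine ⟨(QuotientGroup.mk g1, QuotientGroup.mk g2), ?_⟩
      have h1 : g1 = (QuotientGroup.mk g1 :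
          (FreeProdCyclic m ⧸ C) ⧸ Subgroup.center (FreeProdCyclic m ⧸ C)).out *
          ((QuotientGroup.mk g1 : (FreeProdCyclic m ⧸ C) ⧸ Subgroup.center (FreeProdCyclic m ⧸ C)).out⁻¹ * g1) := by group
      have h2 : g2 = (QuotientGroup.mk g2 :
          (FreeProdCyclic m ⧸ C) ⧸ Subgroup.center (FreeProdCyclic m ⧸ C)).out *
          ((QuotientGroup.mk g2 : (FreeProdCyclic m ⧸ C) ⧸ Subgroup.center (FreeProdCyclic m ⧸ C)).out⁻¹ * g2) := by group
      have hz1 : ((QuotientGroup.mk g1 : (FreeProdCyclic m ⧸ C) ⧸ Subgroup.center (FreeProdCyclic m ⧸ C)).out⁻¹ * g1)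
          ∈ Subgroup.center (FreeProdCyclic m ⧸ C) :=
        QuotientGroup.eq.mp (QuotientGroup.out_eq' _)
      have hz2 : ((QuotientGroup.mk g2 : (FreeProdCyclic m ⧸ C) ⧸ Subgroup.center (FreeProdCyclic m ⧸ C)).out⁻¹ * g2)
          ∈ Subgroup.center (FreeProdCyclic m ⧸ C) :=
        QuotientGroup.eq.mp (QuotientGroup.out_eq' _)
      show ⁅_, _⁆ = ⁅g1, g2⁆
      conv_rhs => rw [h1, h2]
      rw [commutator_central_shift _ _ _ _ hz1 hz2]
    exact (Set.Finite.subset (Set.finite_range _) hsub).to_subtype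
  -- Schur: the commutator subgroup is finite
  haveI hcomm : Finite (commutator (FreeProdCyclic m ⧸ C)) := inferInstance
  -- the abelianization is finite
  have hab : Finite (Abelianization (FreeProdCyclic m ⧸ C)) := by
    refine finite_of_torsion_gens hm
      (fun i => Abelianization.of (mkC (cyclicGen m i))) ?_ ?_
    · set f := (Abelianization.of (G := FreeProdCyclic m ⧸ C)).comp mkC with hf
      have hfsurj : Function.Surjective f :=
        (abelianization_of_surjective).comp (QuotientGroup.mk'_surjective C)
      have h2 : Subgroup.map f (Subgroup.closure (Set.range (cyclicGen m))) = ⊤ := by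
        rw [closure_range_cyclicGen m hm]
        exact Subgroup.map_top_of_surjective f hfsurj
      rw [MonoidHom.map_closure, ← Set.range_comp] at h2
      exact h2
    · intro i
      rw [← map_pow, ← map_pow, cyclicGen_pow, map_one, map_one]
  haveI hab' : Finite ((FreeProdCyclic m ⧸ C) ⧸ commutator (FreeProdCyclic m ⧸ C)) := hab
  exact Finite.of_equiv _ (Subgroup.groupEquivQuotientProdSubgroup
    (s := commutator (FreeProdCyclic m ⧸ C))).symm

end Finiteness

/-!
STATEMENT 10: Let `G` be a finite group whose abelianization `G/[G,G]` is not cyclic, and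
let `1 → R → F → G → 1` be a periodic presentation of `G`.  Then for every `k ≥ 0` the
subgroup `[R,_{k+1}F]` is properly contained in `[R,_kF]`; in particular `[R,F]` is a
proper subgroup of `R`, the orders of the finite groups `F/[R,_kF]` strictly increase with
`k`, and the profinite cover `E_∞ = lim←_k F/[R,_kF]` is an infinite (profinite) group.
-/
theorem profinite_cover_infinite {d : ℕ} (m : Fin d → ℕ) (hm : ∀ i, m i ≠ 0)
    {G : Type*} [Group G] [Finite G] (hnc : ¬ IsCyclic (Abelianization G))
    (π : FreeProdCyclic m →* G) (hsurj : Function.Surjective π) :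
    (∀ k : ℕ, iterComm π.ker (k + 1) < iterComm π.ker k) ∧
    ⁅π.ker, (⊤ : Subgroup (FreeProdCyclic m))⁆ < π.ker ∧
    (∀ k : ℕ, Finite (FreeProdCyclic m ⧸ iterComm π.ker k)) ∧
    (∀ k : ℕ, Nat.card (FreeProdCyclic m ⧸ iterComm π.ker k) <
      Nat.card (FreeProdCyclic m ⧸ iterComm π.ker (k + 1))) ∧
    Infinite (profiniteCover π.ker) := by
  classical
  -- finiteness of all the quotients
  have hfin : ∀ k : ℕ, Finite (FreeProdCyclic m ⧸ iterComm π.ker k) := by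
    intro k
    induction k with
    | zero =>
        have e0 : iterComm π.ker 0 = π.ker := rfl
        rw [e0]
        exact Finite.of_equiv G (QuotientGroup.quotientKerEquivOfSurjective π hsurj).symm.toEquiv
    | succ k ih =>
        haveI := ih
        have e : iterComm π.ker (k + 1) = ⁅iterComm π.ker k, (⊤ : Subgroup (FreeProdCyclic m))⁆ :=
          rfl
        rw [e]
        exact finite_quotient_commutator m hm (iterComm π.ker k)
  -- a prime dividing two of the orders
  obtain ⟨p, i, j, hp, hij, hpi, hpj⟩ := exists_common_prime m hm hnc π hsurj
  -- strict descent
  have hstrict : ∀ k : ℕ, iterComm π.ker (k + 1) < iterComm π.ker k := by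
    intro k
    haveI := hfin k
    have hle : iterComm π.ker (k + 1) ≤ iterComm π.ker k := by
      have e : iterComm π.ker (k + 1) = ⁅iterComm π.ker k, (⊤ : Subgroup (FreeProdCyclic m))⁆ :=
        rfl
      rw [e]
      exact Subgroup.commutator_le_left _ _
    refine lt_of_le_of_ne hle ?_
    intro heq
    exact false_of_commutator_self m hm hp hij hpi hpj (iterComm π.ker k) (hfin k)
      (show ⁅iterComm π.ker k, (⊤ : Subgroup (FreeProdCyclic m))⁆ = iterComm π.ker k from heq)
  -- strictly increasing cardinalities
  have hcard : ∀ k : ℕ, Nat.card (FreeProdCyclic m ⧸ iterComm π.ker k) <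
      Nat.card (FreeProdCyclic m ⧸ iterComm π.ker (k + 1)) := by
    intro k
    haveI := hfin k
    haveI := hfin (k + 1)
    rw [← Subgroup.index_eq_card, ← Subgroup.index_eq_card]
    have hlt := hstrict k
    have hmul := Subgroup.relIndex_mul_index hlt.le
    have hne1 : (iterComm π.ker (k + 1)).index ≠ 0 := Subgroup.index_ne_zero_of_finite
    have hne0 : (iterComm π.ker k).index ≠ 0 := Subgroup.index_ne_zero_of_finite
    have hrne1 : (iterComm π.ker (k + 1)).relIndex (iterComm π.ker k) ≠ 1 := by
      intro h1
      rw [Subgroup.relIndex_eq_one] at h1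
      exact hlt.not_ge h1
    have hrne0 : (iterComm π.ker (k + 1)).relIndex (iterComm π.ker k) ≠ 0 := by
      intro h0
      rw [h0, zero_mul] at hmul
      exact hne1 hmul.symm
    have hr2 : 2 ≤ (iterComm π.ker (k + 1)).relIndex (iterComm π.ker k) := by omega
    calc (iterComm π.ker k).index < 2 * (iterComm π.ker k).index := by omega
      _ ≤ (iterComm π.ker (k + 1)).relIndex (iterComm π.ker k) *
            (iterComm π.ker k).index := Nat.mul_le_mul_right _ hr2
      _ = (iterComm π.ker (k + 1)).index := hmul
  -- cardinalities grow without bound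
  have hmono : ∀ k : ℕ, k + 1 ≤ Nat.card (FreeProdCyclic m ⧸ iterComm π.ker k) := by
    intro k
    induction k with
    | zero =>
        haveI := hfin 0
        have := Nat.card_pos (α := FreeProdCyclic m ⧸ iterComm π.ker 0)
        omega
    | succ k ih =>
        have := hcard k
        omega
  -- the profinite cover is infinite
  have hinf : Infinite (profiniteCover π.ker) := by
    rw [← not_finite_iff_infinite]
    intro hfc
    have hsurjk : ∀ k, Function.Surjective
        (fun x : profiniteCover π.ker => x.1 k) := by
      intro k y
      obtain ⟨x, rfl⟩ := QuotientGroup.mk_surjective y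
      have hmem : (fun n' : ℕ => (QuotientGroup.mk x : FreeProdCyclic m ⧸ iterComm π.ker n'))
          ∈ profiniteCover π.ker := by
        intro k'
        show QuotientGroup.map _ _ (MonoidHom.id _) _ (QuotientGroup.mk x) = QuotientGroup.mk x
        rw [QuotientGroup.map_mk]
        rfl
      exact ⟨⟨_, hmem⟩, rfl⟩
    have hle : ∀ k, Nat.card (FreeProdCyclic m ⧸ iterComm π.ker k) ≤
        Nat.card (profiniteCover π.ker) :=
      fun k => Nat.card_le_card_of_surjective _ (hsurjk k)
    have h1 := hmono (Nat.card (profiniteCover π.ker))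
    have h2 := hle (Nat.card (profiniteCover π.ker))
    omega
  exact ⟨hstrict, hstrict 0, hfin, hcard, hinf⟩
end
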